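/- Let n ≥ 1, let J : Fin n → Fin n → ℝ be symmetric with zero diagonal (J p q = J q p and J p p = 0), and let L be a subset of Fin n. Define J̃ p q = −J p q if exactly one of p, q lies in L, and J̃ p q = J p q otherwise. Let H(J) be the diagonal 2^n × 2^n matrix whose (x,x)-entry is Σ_{p<q} J p q · (−1)^{x_p + x_q}, and let B = Σ_{j} X_j. For P ≥ 1 and β, γ ∈ ℝ^P, let Ψ_J(β,γ) = (∏_{k=1}^{P} exp(i β_k B) exp(i γ_k H(J))) |+^n⟩. Then: (a) for all P, β, γ, ⟨Ψ_{J̃}(β,γ), H(J̃) Ψ_{J̃}(β,γ)⟩ = ⟨Ψ_J(β,γ), H(J) Ψ_J(β,γ)⟩; and (b) the maximum over x : Fin n → Bool of the (x,x)-entry of H(J̃) equals the maximum over x of the (x,x)-entry of H(J). -/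

import Mathlib

open Matrix

/-- The single-qubit Pauli-X operator on qubit `j`: the permutation matrix flipping bit `j`. -/
noncomputable def XopF {n : ℕ} (j : Fin n) : Matrix (Fin n → Bool) (Fin n → Bool) ℂ :=
  Matrix.of (fun x y => if y = Function.update x j (! x j) then 1 else 0)

/-- The transverse-field operator `B = ∑_j X_j`. -/
noncomputable def Bop (n : ℕ) : Matrix (Fin n → Bool) (Fin n → Bool) ℂ :=
  ∑ j : Fin n, XopF j

/-- The classical Ising cost: the `(x,x)`-entry `∑_{p<q} J p q · (−1)^{x_p+x_q}` of `H(J)`. -/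
def isingCost {n : ℕ} (J : Fin n → Fin n → ℝ) (x : Fin n → Bool) : ℝ :=
  ∑ p : Fin n, ∑ q : Fin n, if p < q then J p q * (if x p = x q then 1 else -1) else 0

/-- The Ising Hamiltonian `H(J) = ∑_{p<q} J_{p,q} Z_p Z_q` as a diagonal matrix. -/
noncomputable def isingHam {n : ℕ} (J : Fin n → Fin n → ℝ) :
    Matrix (Fin n → Bool) (Fin n → Bool) ℂ :=
  Matrix.diagonal (fun x => ((isingCost J x : ℝ) : ℂ))

/-- The state `|+^n⟩`: all entries equal to `2^{-n/2}`. -/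
noncomputable def plusF (n : ℕ) : (Fin n → Bool) → ℂ :=
  fun _ => ((1 / Real.sqrt (2 ^ n) : ℝ) : ℂ)

/-- The level-`P` QAOA state `(∏_{k=1}^P e^{iβ_k B} e^{iγ_k H(J)}) |+^n⟩`,
with the `k = 1` factor applied last (leftmost). -/
noncomputable def qaoaState {n : ℕ} (J : Fin n → Fin n → ℝ) (P : ℕ) (β γ : Fin P → ℝ) :
    (Fin n → Bool) → ℂ :=
  (((List.finRange P).map
      (fun k =>
        NormedSpace.exp ((Complex.I * ((β k : ℝ) : ℂ)) • Bop n) *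
        NormedSpace.exp ((Complex.I * ((γ k : ℝ) : ℂ)) • isingHam J))).prod).mulVec
    (plusF n)

namespace Stmt10Aux

variable {n : ℕ}

def gfun (L : Finset (Fin n)) (x : Fin n → Bool) : Fin n → Bool :=
  fun j => xor (decide (j ∈ L)) (x j)

lemma gfun_gfun (L : Finset (Fin n)) (x : Fin n → Bool) : gfun L (gfun L x) = x := by
  funext j; simp [gfun]

noncomputable def Umat (L : Finset (Fin n)) : Matrix (Fin n → Bool) (Fin n → Bool) ℂ :=
  Matrix.of fun x y => if y = gfun L x then 1 else 0

lemma Umat_mulVec (L : Finset (Fin n)) (v : (Fin n → Bool) → ℂ) :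
    (Umat L).mulVec v = fun x => v (gfun L x) := by
  funext x
  simp [Umat, Matrix.mulVec, dotProduct, ite_mul]

lemma Umat_mul (L : Finset (Fin n)) (M : Matrix (Fin n → Bool) (Fin n → Bool) ℂ) :
    Umat L * M = Matrix.of (fun x z => M (gfun L x) z) := by
  ext x z
  simp [Umat, Matrix.mul_apply, ite_mul]

lemma mul_Umat (L : Finset (Fin n)) (M : Matrix (Fin n → Bool) (Fin n → Bool) ℂ) :
    M * Umat L = Matrix.of (fun x z => M x (gfun L z)) := by
  ext x z
  have h : ∀ y : Fin n → Bool, (z = gfun L y) = (y = gfun L z) := by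
    intro y
    simp only [eq_iff_iff]
    constructor
    · intro h; rw [h, gfun_gfun]
    · intro h; rw [h, gfun_gfun]
  simp [Umat, Matrix.mul_apply, mul_ite, h]

lemma Umat_Umat (L : Finset (Fin n)) : Umat L * Umat L = 1 := by
  rw [Umat_mul]
  ext x z
  simp [Umat, gfun_gfun, Matrix.one_apply, eq_comm]

lemma gfun_update (L : Finset (Fin n)) (x : Fin n → Bool) (j : Fin n) (b : Bool) :
    gfun L (Function.update x j b) = Function.update (gfun L x) j (xor (decide (j ∈ L)) b) := by
  funext k
  by_cases h : k = j
  · subst h; simp [gfun]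
  · simp [gfun, Function.update, h]

lemma Umat_comm_Xop (L : Finset (Fin n)) (j : Fin n) :
    Umat L * XopF j = XopF j * Umat L := by
  rw [Umat_mul, mul_Umat]
  ext x z
  have key : Function.update (gfun L x) j (!(gfun L x j)) = gfun L (Function.update x j (!x j)) := by
    rw [gfun_update]
    cases h : x j <;> simp [gfun, h]
  have h2 : (z = gfun L (Function.update x j (!x j))) ↔
      (gfun L z = Function.update x j (!x j)) := by
    constructor
    · intro h; rw [h, gfun_gfun]
    · intro h; rw [← h, gfun_gfun]
  simp [XopF, key, h2]

lemma Umat_comm_Bop (L : Finset (Fin n)) : Umat L * Bop n = Bop n * Umat L := by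
  simp only [Bop, Finset.mul_sum, Finset.sum_mul, Umat_comm_Xop]

/-- the gauge identity on costs -/
lemma cost_gauge (J Jt : Fin n → Fin n → ℝ) (L : Finset (Fin n))
    (hJt : ∀ p q, Jt p q = if (p ∈ L) ↔ (q ∈ L) then J p q else -J p q)
    (x : Fin n → Bool) :
    isingCost Jt x = isingCost J (gfun L x) := by
  unfold isingCost
  refine Finset.sum_congr rfl (fun p _ => Finset.sum_congr rfl (fun q _ => ?_))
  by_cases hpq : p < q
  · simp only [if_pos hpq]
    rw [hJt]
    by_cases hp : p ∈ L <;> by_cases hq : q ∈ L <;> cases hxp : x p <;> cases hxq : x q <;>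
      simp [gfun, hp, hq, hxp, hxq]
  · simp [hpq]

lemma ham_gauge (J Jt : Fin n → Fin n → ℝ) (L : Finset (Fin n))
    (hJt : ∀ p q, Jt p q = if (p ∈ L) ↔ (q ∈ L) then J p q else -J p q) :
    Umat L * isingHam J = isingHam Jt * Umat L := by
  rw [Umat_mul, mul_Umat]
  ext x z
  simp only [Matrix.of_apply, isingHam, Matrix.diagonal_apply]
  by_cases h : z = gfun L x
  · subst h
    simp [gfun_gfun, cost_gauge J Jt L hJt]
  · rw [if_neg, if_neg]
    · intro hc
      exact h ((congrArg (gfun L) hc).trans (gfun_gfun L z)).symm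
    · intro hc
      exact h hc.symm

noncomputable def Uunit (L : Finset (Fin n)) : (Matrix (Fin n → Bool) (Fin n → Bool) ℂ)ˣ :=
  ⟨Umat L, Umat L, Umat_Umat L, Umat_Umat L⟩

lemma exp_ham_gauge (J Jt : Fin n → Fin n → ℝ) (L : Finset (Fin n))
    (hJt : ∀ p q, Jt p q = if (p ∈ L) ↔ (q ∈ L) then J p q else -J p q) (c : ℂ) :
    NormedSpace.exp (c • isingHam Jt) =
      Umat L * NormedSpace.exp (c • isingHam J) * Umat L := by
  have hH : isingHam Jt = Umat L * isingHam J * Umat L := by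
    have := ham_gauge J Jt L hJt
    calc isingHam Jt = isingHam Jt * (Umat L * Umat L) := by rw [Umat_Umat]; simp
    _ = (isingHam Jt * Umat L) * Umat L := by rw [mul_assoc]
    _ = Umat L * isingHam J * Umat L := by rw [← this]
  have hc : c • isingHam Jt = Uunit L * (c • isingHam J) * ((Uunit L)⁻¹ : _ˣ) := by
    show c • isingHam Jt = Umat L * (c • isingHam J) * Umat L
    rw [hH, Matrix.mul_smul, Matrix.smul_mul]
  rw [hc, Matrix.exp_units_conj (Uunit L)]
  rfl

lemma exp_Bop_comm (L : Finset (Fin n)) (c : ℂ) :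
    NormedSpace.exp (c • Bop n) * Umat L = Umat L * NormedSpace.exp (c • Bop n) := by
  have hfix : Uunit L * (c • Bop n) * ((Uunit L)⁻¹ : _ˣ) = c • Bop n := by
    show Umat L * (c • Bop n) * Umat L = c • Bop n
    rw [Matrix.mul_smul, Matrix.smul_mul, Umat_comm_Bop, mul_assoc, Umat_Umat, mul_one]
  have := Matrix.exp_units_conj (Uunit L) (c • Bop n)
  rw [hfix] at this
  have h2 : NormedSpace.exp (c • Bop n) = Umat L * NormedSpace.exp (c • Bop n) * Umat L := this
  calc NormedSpace.exp (c • Bop n) * Umat L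
      = Umat L * NormedSpace.exp (c • Bop n) * Umat L * Umat L := by rw [← h2]
    _ = Umat L * NormedSpace.exp (c • Bop n) * (Umat L * Umat L) := by rw [mul_assoc]
    _ = Umat L * NormedSpace.exp (c • Bop n) := by rw [Umat_Umat, mul_one]

end Stmt10Aux

open Stmt10Aux
theorem stmt10 (n : ℕ) (hn : 1 ≤ n)
    (J : Fin n → Fin n → ℝ)
    (hJsymm : ∀ p q, J p q = J q p) (hJdiag : ∀ p, J p p = 0)
    (L : Finset (Fin n))
    (Jt : Fin n → Fin n → ℝ)
    (hJt : ∀ p q, Jt p q = if (p ∈ L) ↔ (q ∈ L) then J p q else -J p q) :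
    (∀ (P : ℕ), 1 ≤ P → ∀ β γ : Fin P → ℝ,
      star (qaoaState Jt P β γ) ⬝ᵥ (isingHam Jt).mulVec (qaoaState Jt P β γ) =
      star (qaoaState J P β γ) ⬝ᵥ (isingHam J).mulVec (qaoaState J P β γ)) ∧
    Finset.univ.sup' Finset.univ_nonempty (isingCost Jt) =
      Finset.univ.sup' Finset.univ_nonempty (isingCost J) := by
  have hbij : Function.Bijective (gfun L : (Fin n → Bool) → (Fin n → Bool)) :=
    Function.Involutive.bijective (gfun_gfun L)
  constructor
  · intro P hP β γ
    -- product conjugation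
    have hprod : ∀ l : List (Fin P),
        ((l.map (fun k =>
          NormedSpace.exp ((Complex.I * ((β k : ℝ) : ℂ)) • Bop n) *
          NormedSpace.exp ((Complex.I * ((γ k : ℝ) : ℂ)) • isingHam Jt))).prod) =
        Umat L * ((l.map (fun k =>
          NormedSpace.exp ((Complex.I * ((β k : ℝ) : ℂ)) • Bop n) *
          NormedSpace.exp ((Complex.I * ((γ k : ℝ) : ℂ)) • isingHam J))).prod) * Umat L := by
      intro l
      induction l with
      | nil => simp [Umat_Umat]
      | cons k l ih =>
        simp only [List.map_cons, List.prod_cons, ih]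
        rw [exp_ham_gauge J Jt L hJt]
        set E := NormedSpace.exp ((Complex.I * ((β k : ℝ) : ℂ)) • Bop n)
        set F := NormedSpace.exp ((Complex.I * ((γ k : ℝ) : ℂ)) • isingHam J)
        set Q := ((l.map (fun k =>
          NormedSpace.exp ((Complex.I * ((β k : ℝ) : ℂ)) • Bop n) *
          NormedSpace.exp ((Complex.I * ((γ k : ℝ) : ℂ)) • isingHam J))).prod)
        have hE : E * Umat L = Umat L * E := exp_Bop_comm L _
        calc E * (Umat L * F * Umat L) * (Umat L * Q * Umat L)
            = E * Umat L * F * (Umat L * Umat L) * Q * Umat L := by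
              simp only [mul_assoc]
          _ = E * Umat L * F * Q * Umat L := by rw [Umat_Umat]; simp only [mul_assoc, one_mul]
          _ = Umat L * (E * F * Q) * Umat L := by rw [hE]; simp only [mul_assoc]
    have hstate : qaoaState Jt P β γ = fun x => qaoaState J P β γ (gfun L x) := by
      unfold qaoaState
      rw [hprod]
      rw [← Matrix.mulVec_mulVec, ← Matrix.mulVec_mulVec]
      have hplus : (Umat L).mulVec (plusF n) = plusF n := by
        rw [Umat_mulVec]; rfl
      rw [hplus, Umat_mulVec]
    rw [hstate]
    simp only [dotProduct, isingHam, Pi.star_apply, Matrix.mulVec_diagonal]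
    have hre := Function.Bijective.sum_comp hbij
      (fun y => star (qaoaState J P β γ y) * (((isingCost J y : ℝ) : ℂ) * qaoaState J P β γ y))
    rw [← hre]
    refine Finset.sum_congr rfl fun x _ => ?_
    rw [cost_gauge J Jt L hJt x]
  · -- part (b)
    apply le_antisymm
    · apply Finset.sup'_le
      intro x _
      rw [cost_gauge J Jt L hJt x]
      exact Finset.le_sup' (isingCost J) (Finset.mem_univ _)
    · apply Finset.sup'_le
      intro x _
      have : isingCost J x = isingCost Jt (gfun L x) := by
        rw [cost_gauge J Jt L hJt, gfun_gfun]
      rw [this]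
      exact Finset.le_sup' (isingCost Jt) (Finset.mem_univ _)
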